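/- arXiv:0905.3447 — 3 statements merged into one kernel-verified Lean document; each statement's English description precedes it below -/
import Mathlib

section
/- Let Γ_{h,Σ} be the r-dimensional Gaussian measure with mean h and nonsingular covariance Σ. Then for ε ∈ (0,1): Γ_{h,Σ}({ξ : ‖ξ − h‖_{Σ⁻¹} > √(r/(1−ε))}) ≤ exp(−rε²/4) and Γ_{h,Σ}({ξ : ‖ξ − h‖_{Σ⁻¹} < √(r(1−ε))}) ≤ exp(−rε²/4). -/
open MeasureTheory ProbabilityTheory
open scoped Matrix BigOperators

/-- The law of a standard Gaussian vector in `ℝʳ`. -/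
noncomputable def stdGaussPi (r : ℕ) : Measure (Fin r → ℝ) :=
  Measure.pi fun _ => gaussianReal 0 1


open Real
open scoped NNReal ENNReal

lemma gauss_density (s : ℝ) :
    ∫ x, Real.exp (s * x ^ 2) ∂(gaussianReal 0 1)
      = ∫ x, gaussianPDFReal 0 1 x * Real.exp (s * x ^ 2) := by
  rw [gaussianReal_of_var_ne_zero _ one_ne_zero]
  have hd : (gaussianPDF 0 1) = fun x => ((Real.toNNReal (gaussianPDFReal 0 1 x) : ℝ≥0) : ℝ≥0∞) := by
    funext x; rfl
  rw [hd, integral_withDensity_eq_integral_smul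
    (by exact (measurable_gaussianPDFReal 0 1).real_toNNReal)]
  congr 1; funext x
  simp [NNReal.smul_def, Real.coe_toNNReal _ (gaussianPDFReal_nonneg 0 1 x)]

lemma gauss_pdf_mul (s : ℝ) (x : ℝ) :
    gaussianPDFReal 0 1 x * Real.exp (s * x ^ 2)
      = (Real.sqrt (2 * π))⁻¹ * Real.exp (-(1/2 - s) * x ^ 2) := by
  simp only [gaussianPDFReal]
  rw [mul_assoc, ← Real.exp_add]
  norm_num
  ring_nf
  tauto

lemma gauss_mgf_integrable {s : ℝ} (hs : s < 1/2) :
    Integrable (fun x => Real.exp (s * x ^ 2)) (gaussianReal 0 1) := by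
  rw [gaussianReal_of_var_ne_zero _ one_ne_zero]
  have hd : (gaussianPDF 0 1) = fun x => ((Real.toNNReal (gaussianPDFReal 0 1 x) : ℝ≥0) : ℝ≥0∞) := by
    funext x; rfl
  rw [hd, integrable_withDensity_iff_integrable_smul
    (by exact (measurable_gaussianPDFReal 0 1).real_toNNReal)]
  have : (fun x => (Real.toNNReal (gaussianPDFReal 0 1 x) : ℝ≥0) • Real.exp (s * x ^ 2))
      = fun x => (Real.sqrt (2 * π))⁻¹ * Real.exp (-(1/2 - s) * x ^ 2) := by
    funext x
    rw [NNReal.smul_def, smul_eq_mul, Real.coe_toNNReal _ (gaussianPDFReal_nonneg 0 1 x)]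
    exact gauss_pdf_mul s x
  rw [this]
  exact (integrable_exp_neg_mul_sq (by linarith)).const_mul _

lemma gauss_mgf_integral {s : ℝ} (hs : s < 1/2) :
    ∫ x, Real.exp (s * x ^ 2) ∂(gaussianReal 0 1) = (Real.sqrt (1 - 2 * s))⁻¹ := by
  rw [gauss_density]
  simp_rw [gauss_pdf_mul s]
  rw [integral_const_mul, integral_gaussian]
  have hb : (0:ℝ) < 1/2 - s := by linarith
  rw [← Real.sqrt_inv, ← Real.sqrt_inv, ← Real.sqrt_mul (by positivity)]
  congr 1
  have hπ := Real.pi_pos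
  rw [div_eq_mul_inv, eq_comm, inv_eq_iff_eq_inv, mul_inv]
  rw [inv_inv, mul_inv, inv_inv]
  field_simp

instance (r : ℕ) : IsProbabilityMeasure (stdGaussPi r) := by
  unfold stdGaussPi; infer_instance

lemma stdGauss_exp_prod (r : ℕ) (s : ℝ) :
    (fun z : Fin r → ℝ => Real.exp (s * ∑ i, z i ^ 2))
      = fun z => ∏ i, Real.exp (s * z i ^ 2) := by
  funext z
  rw [Finset.mul_sum, Real.exp_sum]

lemma stdGauss_mgf_integrable (r : ℕ) {s : ℝ} (hs : s < 1/2) :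
    Integrable (fun z : Fin r → ℝ => Real.exp (s * ∑ i, z i ^ 2)) (stdGaussPi r) := by
  letI : MeasureSpace ℝ := ⟨gaussianReal 0 1⟩
  haveI : SigmaFinite (volume : Measure ℝ) :=
    @IsFiniteMeasure.toSigmaFinite _ _ _ (inferInstanceAs (IsFiniteMeasure (gaussianReal 0 1)))
  rw [stdGauss_exp_prod]
  exact Integrable.fintype_prod (f := fun (_ : Fin r) (x : ℝ) => Real.exp (s * x ^ 2))
    (fun _ => gauss_mgf_integrable hs)

lemma stdGauss_mgf_integral (r : ℕ) {s : ℝ} (hs : s < 1/2) :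
    ∫ z, Real.exp (s * ∑ i, z i ^ 2) ∂(stdGaussPi r) = ((Real.sqrt (1 - 2 * s))⁻¹) ^ r := by
  letI : MeasureSpace ℝ := ⟨gaussianReal 0 1⟩
  haveI : SigmaFinite (volume : Measure ℝ) :=
    @IsFiniteMeasure.toSigmaFinite _ _ _ (inferInstanceAs (IsFiniteMeasure (gaussianReal 0 1)))
  rw [stdGauss_exp_prod]
  rw [show (stdGaussPi r) = (volume : Measure (Fin r → ℝ)) from rfl]
  rw [show (volume : Measure (Fin r → ℝ)) = Measure.pi (fun _ => gaussianReal 0 1) from rfl,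
    MeasureTheory.integral_fintype_prod_eq_pow (fun x : ℝ => Real.exp (s * x ^ 2)),
    gauss_mgf_integral hs, Fintype.card_fin]

lemma chernoff_upper (r : ℕ) {t a : ℝ} (ht0 : 0 ≤ t) (ht : t < 1/2) :
    (stdGaussPi r) {z | a ≤ ∑ i, z i ^ 2}
      ≤ ENNReal.ofReal (Real.exp (-t * a) * ((Real.sqrt (1 - 2 * t))⁻¹) ^ r) := by
  have h := measure_ge_le_exp_mul_mgf (μ := stdGaussPi r)
    (X := fun z : Fin r → ℝ => ∑ i, z i ^ 2) a ht0 (stdGauss_mgf_integrable r ht)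
  have hm : mgf (fun z : Fin r → ℝ => ∑ i, z i ^ 2) (stdGaussPi r) t
      = ((Real.sqrt (1 - 2 * t))⁻¹) ^ r := stdGauss_mgf_integral r ht
  rw [hm] at h
  exact (ENNReal.le_ofReal_iff_toReal_le (measure_ne_top _ _) (by positivity)).mpr h

lemma chernoff_lower (r : ℕ) {t b : ℝ} (ht0 : 0 ≤ t) :
    (stdGaussPi r) {z | (∑ i, z i ^ 2) ≤ b}
      ≤ ENNReal.ofReal (Real.exp (t * b) * ((Real.sqrt (1 + 2 * t))⁻¹) ^ r) := by
  have ht : -t < 1/2 := by linarith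
  have h := measure_le_le_exp_mul_mgf (μ := stdGaussPi r)
    (X := fun z : Fin r → ℝ => ∑ i, z i ^ 2) b (neg_nonpos.mpr ht0)
    (stdGauss_mgf_integrable r ht)
  have hm : mgf (fun z : Fin r → ℝ => ∑ i, z i ^ 2) (stdGaussPi r) (-t)
      = ((Real.sqrt (1 + 2 * t))⁻¹) ^ r := by
    have := stdGauss_mgf_integral r (s := -t) ht
    rw [show (1 - 2 * (-t)) = 1 + 2 * t by ring] at this
    exact this
  rw [hm, neg_neg] at h
  exact (ENNReal.le_ofReal_iff_toReal_le (measure_ne_top _ _) (by positivity)).mpr h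

lemma log_one_sub_le {ε : ℝ} (h0 : 0 < ε) (h1 : ε < 1) :
    Real.log (1 - ε) ≤ -ε - ε ^ 2 / 2 := by
  set f : ℝ → ℝ := fun x => -x - x ^ 2 / 2 - Real.log (1 - x) with hf
  have hder : ∀ x ∈ Set.Icc (0:ℝ) ε, HasDerivAt f (-1 - x - (1 - x)⁻¹ * (-1)) x := by
    intro x hx
    have hx1 : (1:ℝ) - x ≠ 0 := by
      have := hx.2; intro hc; have : x < 1 := lt_of_le_of_lt hx.2 h1; linarith
    have hlog : HasDerivAt (fun x : ℝ => Real.log (1 - x)) ((1 - x)⁻¹ * (-1)) x :=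
      (Real.hasDerivAt_log hx1).comp x ((hasDerivAt_id x).const_sub 1)
    have h1' : HasDerivAt (fun x : ℝ => -x - x ^ 2 / 2) (-1 - x) x := by
      have := ((hasDerivAt_pow 2 x).div_const 2).neg
      have h2 := (hasDerivAt_id x).neg
      exact (h2.sub ((hasDerivAt_pow 2 x).div_const 2)).congr_deriv (by simp)
    exact h1'.sub hlog
  have hmono : MonotoneOn f (Set.Icc 0 ε) := by
    apply monotoneOn_of_deriv_nonneg (convex_Icc 0 ε)
    · exact fun x hx => (hder x hx).continuousAt.continuousWithinAt
    · intro x hx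
      rw [interior_Icc] at hx
      exact (hder x ⟨hx.1.le, hx.2.le⟩).differentiableAt.differentiableWithinAt
    · intro x hx
      rw [interior_Icc] at hx
      rw [(hder x ⟨hx.1.le, hx.2.le⟩).deriv]
      have hx1 : 0 < 1 - x := by have := hx.2; linarith
      have key : 1 + x ≤ (1 - x)⁻¹ := by
        rw [inv_eq_one_div, le_div_iff₀ hx1]
        nlinarith [sq_nonneg x, hx.1.le]
      nlinarith
  have h00 : f 0 = 0 := by simp [hf]
  have := hmono (Set.left_mem_Icc.mpr h0.le) (Set.right_mem_Icc.mpr h0.le) h0.le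
  rw [h00] at this
  simp only [hf] at this
  linarith

lemma neg_log_one_sub_le {ε : ℝ} (h0 : 0 < ε) (h1 : ε < 1) :
    -Real.log (1 - ε) ≤ ((1 - ε)⁻¹ - (1 - ε)) / 2 := by
  have hpos : (0:ℝ) < 1 - ε := by linarith
  have hu : 0 < -Real.log (1 - ε) := by
    have := Real.log_neg hpos (by linarith); linarith
  have hs := Real.self_lt_sinh_iff.mpr hu
  rw [Real.sinh_eq] at hs
  have he : Real.exp (-Real.log (1 - ε)) = (1 - ε)⁻¹ := by
    rw [← Real.log_inv, Real.exp_log (by positivity)]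
  have he2 : Real.exp (-(-Real.log (1 - ε))) = 1 - ε := by
    rw [neg_neg, Real.exp_log hpos]
  rw [he, he2] at hs
  linarith

lemma upper_bound_real (r : ℕ) {ε : ℝ} (h0 : 0 < ε) (h1 : ε < 1) :
    Real.exp (-(ε/2) * ((r:ℝ) / (1 - ε))) * ((Real.sqrt (1 - 2 * (ε/2)))⁻¹) ^ r
      ≤ Real.exp (-(r:ℝ) * ε ^ 2 / 4) := by
  have hpos : (0:ℝ) < 1 - ε := by linarith
  rw [show 1 - 2 * (ε/2) = 1 - ε by ring]
  have hx : (Real.sqrt (1 - ε))⁻¹ = Real.exp (-(Real.log (1 - ε)) / 2) := by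
    have hl : -(Real.log (1 - ε)) / 2 = Real.log ((Real.sqrt (1 - ε))⁻¹) := by
      rw [Real.log_inv, Real.log_sqrt hpos.le]; ring
    rw [hl, Real.exp_log (by positivity)]
  have hsq : ((Real.sqrt (1 - ε))⁻¹) ^ r = Real.exp ((r:ℝ) * (-(Real.log (1 - ε)) / 2)) := by
    rw [hx, ← Real.exp_nat_mul]
  rw [hsq, ← Real.exp_add, Real.exp_le_exp]
  have hkey := neg_log_one_sub_le h0 h1
  have hinv : 1 ≤ (1 - ε)⁻¹ := by
    rw [le_inv_comm₀ one_pos hpos]; linarith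
  have hinv' : (1 - ε)⁻¹ * (1 - ε) = 1 := inv_mul_cancel₀ hpos.ne'
  have hr : (0:ℝ) ≤ (r:ℝ) := Nat.cast_nonneg r
  have h2 : (r:ℝ) * (-(Real.log (1 - ε)) / 2) ≤ (r:ℝ) * (((1 - ε)⁻¹ - (1 - ε)) / 4) := by
    apply mul_le_mul_of_nonneg_left _ hr
    linarith
  have h3 : -(ε/2) * ((r:ℝ) / (1 - ε)) = -(r:ℝ) * (ε / 2) * (1 - ε)⁻¹ := by
    field_simp
  rw [h3]
  have h4 : (r:ℝ) * (((1 - ε)⁻¹ - (1 - ε)) / 4) + -(r:ℝ) * (ε / 2) * (1 - ε)⁻¹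
      ≤ -(r:ℝ) * ε ^ 2 / 4 := by
    have expand : ((1 - ε)⁻¹ - (1 - ε)) / 4 - (ε / 2) * (1 - ε)⁻¹
        = -(ε ^ 2 / 4) * (1 - ε)⁻¹ := by
      field_simp
      ring
    have : (r:ℝ) * (((1 - ε)⁻¹ - (1 - ε)) / 4) + -(r:ℝ) * (ε / 2) * (1 - ε)⁻¹
        = (r:ℝ) * (-(ε ^ 2 / 4) * (1 - ε)⁻¹) := by rw [← expand]; ring
    rw [this]
    have : (r:ℝ) * (ε ^ 2 / 4) * 1 ≤ (r:ℝ) * (ε ^ 2 / 4) * (1 - ε)⁻¹ := by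
      apply mul_le_mul_of_nonneg_left hinv (by positivity)
    nlinarith
  linarith

lemma lower_bound_real (r : ℕ) {ε : ℝ} (h0 : 0 < ε) (h1 : ε < 1) :
    Real.exp ((ε / (2 * (1 - ε))) * ((r:ℝ) * (1 - ε)))
        * ((Real.sqrt (1 + 2 * (ε / (2 * (1 - ε)))))⁻¹) ^ r
      ≤ Real.exp (-(r:ℝ) * ε ^ 2 / 4) := by
  have hpos : (0:ℝ) < 1 - ε := by linarith
  have h1t : 1 + 2 * (ε / (2 * (1 - ε))) = (1 - ε)⁻¹ := by
    field_simp
    ring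
  have h2t : (ε / (2 * (1 - ε))) * ((r:ℝ) * (1 - ε)) = (r:ℝ) * ε / 2 := by
    field_simp
  rw [h1t, h2t, Real.sqrt_inv, inv_inv]
  have hx : Real.sqrt (1 - ε) = Real.exp (Real.log (1 - ε) / 2) := by
    rw [← Real.log_sqrt hpos.le, Real.exp_log (by positivity)]
  have hsq : (Real.sqrt (1 - ε)) ^ r = Real.exp ((r:ℝ) * (Real.log (1 - ε) / 2)) := by
    rw [hx, ← Real.exp_nat_mul]
  rw [hsq, ← Real.exp_add, Real.exp_le_exp]
  have hkey := log_one_sub_le h0 h1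
  have hr : (0:ℝ) ≤ (r:ℝ) := Nat.cast_nonneg r
  have : (r:ℝ) * (Real.log (1 - ε) / 2) ≤ (r:ℝ) * ((-ε - ε ^ 2 / 2) / 2) := by
    apply mul_le_mul_of_nonneg_left _ hr
    linarith
  nlinarith

/-- The `r`-dimensional Gaussian measure with mean `h` and covariance `Σ`
(realized as the law of `h + Σ^{1/2} Z` with `Z` standard Gaussian). -/
noncomputable def gaussianVec {r : ℕ} (h : Fin r → ℝ)
    (Shalf : Matrix (Fin r) (Fin r) ℝ) : Measure (Fin r → ℝ) :=
  (stdGaussPi r).map (fun z => h + Shalf.mulVec z)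

/-- Gaussian concentration of measure: for the Gaussian measure `Γ_{h,Σ}` with
nonsingular covariance `Σ` and `ε ∈ (0,1)`, the mass outside the Mahalanobis
shell of radius about `√r` is at most `exp(−rε²/4)`. -/
theorem gaussian_concentration
    {r : ℕ} (h : Fin r → ℝ) (Sig Shalf : Matrix (Fin r) (Fin r) ℝ)
    (hSig : Sig.PosDef) (hShalf : Shalf.PosDef) (hsq : Shalf * Shalf = Sig)
    (ε : ℝ) (hε : ε ∈ Set.Ioo (0:ℝ) 1) :
    gaussianVec h Shalf
        {ξ : Fin r → ℝ | Real.sqrt ((ξ - h) ⬝ᵥ Sig⁻¹.mulVec (ξ - h)) >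
          Real.sqrt ((r : ℝ) / (1 - ε))}
      ≤ ENNReal.ofReal (Real.exp (-(r : ℝ) * ε ^ 2 / 4)) ∧
    gaussianVec h Shalf
        {ξ : Fin r → ℝ | Real.sqrt ((ξ - h) ⬝ᵥ Sig⁻¹.mulVec (ξ - h)) <
          Real.sqrt ((r : ℝ) * (1 - ε))}
      ≤ ENNReal.ofReal (Real.exp (-(r : ℝ) * ε ^ 2 / 4)) := by
  obtain ⟨hε0, hε1⟩ := hε
  have hpos : (0:ℝ) < 1 - ε := by linarith
  -- matrix identity
  have hdet : IsUnit Shalf.det := (Matrix.PosDef.det_pos hShalf).ne'.isUnit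
  have hT : Shalfᵀ = Shalf := by
    have := hShalf.isHermitian
    exact (by simpa using this : Shalf.IsSymm)
  have hId : Shalf * (Sig⁻¹ * Shalf) = 1 := by
    rw [← hsq, Matrix.mul_inv_rev, mul_assoc, Matrix.nonsing_inv_mul _ hdet, mul_one,
      Matrix.mul_nonsing_inv _ hdet]
  have hquad : ∀ z : Fin r → ℝ,
      (Shalf.mulVec z) ⬝ᵥ Sig⁻¹.mulVec (Shalf.mulVec z) = ∑ i, z i ^ 2 := by
    intro z
    rw [Matrix.mulVec_mulVec, Matrix.dotProduct_mulVec, ← hT, Matrix.mulVec_transpose,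
      Matrix.vecMul_vecMul, hT, hId, Matrix.vecMul_one]
    simp [dotProduct, sq]
  -- measurability
  have hF : Measurable (fun z : Fin r → ℝ => h + Shalf.mulVec z) := by
    apply Measurable.add measurable_const
    apply measurable_pi_lambda
    intro i
    simp only [Matrix.mulVec, dotProduct]
    exact Finset.measurable_sum _ fun j _ => (measurable_pi_apply j).const_mul _
  have hq : Measurable (fun ξ : Fin r → ℝ =>
      Real.sqrt ((ξ - h) ⬝ᵥ Sig⁻¹.mulVec (ξ - h))) := by
    apply Real.continuous_sqrt.measurable.comp
    simp only [dotProduct, Matrix.mulVec, Pi.sub_apply]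
    apply Finset.measurable_sum
    intro i _
    apply Measurable.mul
    · exact (measurable_pi_apply i).sub measurable_const
    · exact Finset.measurable_sum _ fun j _ =>
        measurable_const.mul ((measurable_pi_apply j).sub measurable_const)
  have hS1 : MeasurableSet {ξ : Fin r → ℝ |
      Real.sqrt ((ξ - h) ⬝ᵥ Sig⁻¹.mulVec (ξ - h)) > Real.sqrt ((r : ℝ) / (1 - ε))} :=
    measurableSet_lt measurable_const hq
  have hS2 : MeasurableSet {ξ : Fin r → ℝ |
      Real.sqrt ((ξ - h) ⬝ᵥ Sig⁻¹.mulVec (ξ - h)) < Real.sqrt ((r : ℝ) * (1 - ε))} :=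
    measurableSet_lt hq measurable_const
  have hsum_nonneg : ∀ z : Fin r → ℝ, (0:ℝ) ≤ ∑ i, z i ^ 2 :=
    fun z => Finset.sum_nonneg fun i _ => sq_nonneg _
  constructor
  · rw [gaussianVec, Measure.map_apply hF hS1]
    have hset : (fun z : Fin r → ℝ => h + Shalf.mulVec z) ⁻¹'
        {ξ | Real.sqrt ((ξ - h) ⬝ᵥ Sig⁻¹.mulVec (ξ - h)) > Real.sqrt ((r : ℝ) / (1 - ε))}
        ⊆ {z | (r : ℝ) / (1 - ε) ≤ ∑ i, z i ^ 2} := by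
      intro z hz
      simp only [Set.mem_preimage, Set.mem_setOf_eq, gt_iff_lt, add_sub_cancel_left,
        hquad z] at hz
      have := (Real.sqrt_lt_sqrt_iff (by positivity)).mp hz
      exact this.le
    refine le_trans (measure_mono hset) ?_
    refine le_trans (chernoff_upper r (t := ε/2) (by linarith) (by linarith)) ?_
    exact ENNReal.ofReal_le_ofReal (upper_bound_real r hε0 hε1)
  · rw [gaussianVec, Measure.map_apply hF hS2]
    have hset : (fun z : Fin r → ℝ => h + Shalf.mulVec z) ⁻¹'
        {ξ | Real.sqrt ((ξ - h) ⬝ᵥ Sig⁻¹.mulVec (ξ - h)) < Real.sqrt ((r : ℝ) * (1 - ε))}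
        ⊆ {z | (∑ i, z i ^ 2) ≤ (r : ℝ) * (1 - ε)} := by
      intro z hz
      simp only [Set.mem_preimage, Set.mem_setOf_eq, add_sub_cancel_left, hquad z] at hz
      have := (Real.sqrt_lt_sqrt_iff (hsum_nonneg z)).mp hz
      exact this.le
    refine le_trans (measure_mono hset) ?_
    refine le_trans (chernoff_lower r (t := ε / (2 * (1 - ε))) (by positivity)) ?_
    exact ENNReal.ofReal_le_ofReal (lower_bound_real r hε0 hε1)
end

section
/- Let ξ ∈ ℝʳ, S ∈ ℝʳˣᵐ. Then sup_{‖v‖≤1} ‖ξ + Sv‖² ≤ 1 if and only if there exists λ ≥ 0 such that the block matrix [[−ξᵀξ − λ + 1, ξᵀS], [Sᵀξ, λI − SᵀS]] is positive semidefinite. -/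
open scoped Matrix BigOperators
open Matrix Filter

private lemma dot_self_nonneg' {n : ℕ} (v : Fin n → ℝ) : 0 ≤ v ⬝ᵥ v :=
  Finset.sum_nonneg fun i _ => mul_self_nonneg _

theorem quadform_eq {r m : ℕ} (ξ : Fin r → ℝ) (S : Matrix (Fin r) (Fin m) ℝ) (l t : ℝ) (v : Fin m → ℝ) :
    (Sum.elim (fun _ : Fin 1 => t) v) ⬝ᵥ
      ((Matrix.fromBlocks
            (Matrix.of fun _ _ : Fin 1 => -(ξ ⬝ᵥ ξ) - l + 1)
            (Matrix.of fun _ (j : Fin m) => (ξ ᵥ* S) j)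
            (Matrix.of fun (i : Fin m) _ => (ξ ᵥ* S) i)
            (l • (1 : Matrix (Fin m) (Fin m) ℝ) - Sᵀ * S)) *ᵥ (Sum.elim (fun _ : Fin 1 => t) v))
    = t^2 + l * (v ⬝ᵥ v - t^2)
      - (t • ξ - S *ᵥ v) ⬝ᵥ (t • ξ - S *ᵥ v) := by
  have key : (ξ ᵥ* S) ⬝ᵥ v = ξ ⬝ᵥ (S *ᵥ v) := (dotProduct_mulVec ξ S v).symm
  rw [fromBlocks_mulVec]
  simp only [Sum.elim_comp_inl, Sum.elim_comp_inr]
  rw [sumElim_dotProduct_sumElim]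
  have h1 : (fun _ : Fin 1 => t) ⬝ᵥ ((Matrix.of fun _ _ : Fin 1 => -(ξ ⬝ᵥ ξ) - l + 1) *ᵥ fun _ => t)
      = (-(ξ ⬝ᵥ ξ) - l + 1) * t^2 := by
    simp [mulVec, dotProduct, Fin.sum_univ_one]; ring
  have h2 : (fun _ : Fin 1 => t) ⬝ᵥ ((Matrix.of fun _ (j : Fin m) => (ξ ᵥ* S) j) *ᵥ v)
      = t * ((ξ ᵥ* S) ⬝ᵥ v) := by
    simp [mulVec, dotProduct, Fin.sum_univ_one]
  have h3 : v ⬝ᵥ ((Matrix.of fun (i : Fin m) _ => (ξ ᵥ* S) i) *ᵥ fun _ : Fin 1 => t)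
      = t * ((ξ ᵥ* S) ⬝ᵥ v) := by
    simp only [mulVec, dotProduct, Fin.sum_univ_one, Finset.mul_sum, of_apply]
    exact Finset.sum_congr rfl (fun i _ => by ring)
  have h4 : v ⬝ᵥ ((l • (1 : Matrix (Fin m) (Fin m) ℝ) - Sᵀ * S) *ᵥ v)
      = l * (v ⬝ᵥ v) - (S *ᵥ v) ⬝ᵥ (S *ᵥ v) := by
    rw [sub_mulVec, dotProduct_sub, smul_mulVec, one_mulVec, dotProduct_smul,
      ← mulVec_mulVec, dotProduct_mulVec v Sᵀ, vecMul_transpose]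
    simp [smul_eq_mul]
  rw [dotProduct_add, dotProduct_add, h1, h2, h3, h4, key]
  rw [dotProduct_sub, sub_dotProduct, sub_dotProduct, dotProduct_smul, smul_dotProduct,
    smul_dotProduct, dotProduct_smul, dotProduct_comm (S *ᵥ v) ξ]
  simp only [smul_eq_mul]; ring


theorem M_symm {r m : ℕ} (ξ : Fin r → ℝ) (S : Matrix (Fin r) (Fin m) ℝ) (l : ℝ) :
    (Matrix.fromBlocks
            (Matrix.of fun _ _ : Fin 1 => -(ξ ⬝ᵥ ξ) - l + 1)
            (Matrix.of fun _ (j : Fin m) => (ξ ᵥ* S) j)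
            (Matrix.of fun (i : Fin m) _ => (ξ ᵥ* S) i)
            (l • (1 : Matrix (Fin m) (Fin m) ℝ) - Sᵀ * S)).IsHermitian := by
  rw [Matrix.IsHermitian]
  ext i j
  rcases i with i | i <;> rcases j with j | j <;>
    simp [Matrix.conjTranspose_apply, Matrix.fromBlocks, Matrix.one_apply, Matrix.mul_apply,
      mul_comm]
  by_cases h : i = j
  · subst h; rfl
  · rw [if_neg h, if_neg (fun h' => h h'.symm)]

set_option maxHeartbeats 1600000 in
theorem key_step {r m : ℕ} (ξ : Fin r → ℝ) (S : Matrix (Fin r) (Fin m) ℝ)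
    (vs : Fin m → ℝ) (hvs1 : vs ⬝ᵥ vs = 1)
    (hmax : ∀ v : Fin m → ℝ, v ⬝ᵥ v = 1 →
      (ξ + S *ᵥ v) ⬝ᵥ (ξ + S *ᵥ v) ≤ (ξ + S *ᵥ vs) ⬝ᵥ (ξ + S *ᵥ vs))
    (hq1 : (ξ + S *ᵥ vs) ⬝ᵥ (ξ + S *ᵥ vs) ≤ 1) :
    ∃ l : ℝ, 0 ≤ l ∧ ∀ (t : ℝ) (v : Fin m → ℝ),
      0 ≤ t^2 + l * (v ⬝ᵥ v - t^2) - (t • ξ + S *ᵥ v) ⬝ᵥ (t • ξ + S *ᵥ v) := by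
  -- master inequality
  have master : ∀ (c : ℝ) (d : Fin m → ℝ), (vs - c • d) ⬝ᵥ (vs - c • d) = 1 →
      0 ≤ 2*c*((ξ + S *ᵥ vs) ⬝ᵥ (S *ᵥ d)) - c^2*((S *ᵥ d) ⬝ᵥ (S *ᵥ d)) := by
    intro c d hunit
    have h := hmax _ hunit
    have e : (ξ + S *ᵥ (vs - c • d)) ⬝ᵥ (ξ + S *ᵥ (vs - c • d))
        = (ξ + S *ᵥ vs) ⬝ᵥ (ξ + S *ᵥ vs)
          - 2*c*((ξ + S *ᵥ vs) ⬝ᵥ (S *ᵥ d)) + c^2*((S *ᵥ d) ⬝ᵥ (S *ᵥ d)) := by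
      rw [mulVec_sub, mulVec_smul]
      simp only [dotProduct_add, add_dotProduct, dotProduct_sub, sub_dotProduct,
        dotProduct_smul, smul_dotProduct, smul_eq_mul,
        dotProduct_comm (S *ᵥ d) ξ, dotProduct_comm (S *ᵥ d) (S *ᵥ vs),
        dotProduct_comm (S *ᵥ vs) ξ]
      ring
    rw [e] at h
    linarith
  set w : Fin r → ℝ := ξ + S *ᵥ vs with hw
  set u : Fin m → ℝ := Sᵀ *ᵥ w with hu
  have hud : ∀ d : Fin m → ℝ, u ⬝ᵥ d = w ⬝ᵥ (S *ᵥ d) := by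
    intro d
    rw [hu, mulVec_transpose]
    exact (dotProduct_mulVec w S d).symm
  set μ : ℝ := u ⬝ᵥ vs with hμ
  set g : Fin m → ℝ := u - μ • vs with hg
  have hgu : u = g + μ • vs := by rw [hg]; abel
  have hgvs : g ⬝ᵥ vs = 0 := by
    rw [hg, sub_dotProduct, smul_dotProduct, hvs1]
    simp [hμ]
  have hvsg : vs ⬝ᵥ g = 0 := by rw [dotProduct_comm]; exact hgvs
  -- stationarity : g = 0
  have hgzero : g = 0 := by
    set G : ℝ := g ⬝ᵥ g with hG
    have hGnn : 0 ≤ G := dot_self_nonneg' g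
    set Z0 : ℝ := (S *ᵥ g) ⬝ᵥ (S *ᵥ g) with hZ0
    set Z1 : ℝ := (S *ᵥ g) ⬝ᵥ (S *ᵥ vs) with hZ1
    set Z2 : ℝ := (S *ᵥ vs) ⬝ᵥ (S *ᵥ vs) with hZ2
    set f : ℝ → ℝ := fun ε => (G + ε*μ)*(G + ε^2) - ε*(Z0 + 2*ε*Z1 + ε^2*Z2) with hf
    have hfneg : ∀ ε ∈ Set.Iio (0:ℝ), f ε ≤ 0 := by
      intro ε hε
      have hεlt : ε < 0 := hε
      set D : ℝ := G + ε^2 with hD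
      have hDpos : 0 < D := by nlinarith
      set d : Fin m → ℝ := g + ε • vs with hd
      have hvsd : vs ⬝ᵥ d = ε := by
        rw [hd, dotProduct_add, dotProduct_smul, hvsg, hvs1]; simp
      have hdd : d ⬝ᵥ d = D := by
        rw [hd]
        simp only [dotProduct_add, add_dotProduct, dotProduct_smul, smul_dotProduct,
          smul_eq_mul, hgvs, hvsg, hvs1]
        rw [hD, hG]; ring
      set c : ℝ := 2*ε/D with hc
      have hcD : c * D = 2*ε := by rw [hc]; field_simp
      have hunit : (vs - c • d) ⬝ᵥ (vs - c • d) = 1 := by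
        simp only [dotProduct_sub, sub_dotProduct, dotProduct_smul, smul_dotProduct,
          smul_eq_mul, hvs1, hdd, hvsd, dotProduct_comm d vs]
        linear_combination c * hcD
      have h := master c d hunit
      have hwd : w ⬝ᵥ (S *ᵥ d) = G + ε*μ := by
        rw [← hud, hgu, hd]
        simp only [dotProduct_add, add_dotProduct, dotProduct_smul, smul_dotProduct,
          smul_eq_mul, hgvs, hvsg, hvs1]
        rw [hG]; ring
      have hzd : (S *ᵥ d) ⬝ᵥ (S *ᵥ d) = Z0 + 2*ε*Z1 + ε^2*Z2 := by
        rw [hd, mulVec_add, mulVec_smul]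
        simp only [dotProduct_add, add_dotProduct, dotProduct_smul, smul_dotProduct,
          smul_eq_mul, dotProduct_comm (S *ᵥ vs) (S *ᵥ g)]
        rw [hZ0, hZ1, hZ2]; ring
      rw [hwd, hzd] at h
      have h2 : 0 ≤ D^2*(2*c*(G + ε*μ) - c^2*(Z0 + 2*ε*Z1 + ε^2*Z2)) :=
        mul_nonneg (sq_nonneg D) h
      have e2 : D^2*(2*c*(G + ε*μ) - c^2*(Z0 + 2*ε*Z1 + ε^2*Z2))
          = 2*(c*D)*(D*(G + ε*μ)) - (c*D)^2*(Z0 + 2*ε*Z1 + ε^2*Z2) := by ring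
      rw [e2, hcD] at h2
      -- h2 : 0 ≤ 4ε D (G+εμ) - 4ε² Z  ⇒  ε * f ε ≥ 0 ⇒ f ε ≤ 0
      rw [hD] at h2
      have hεf : 0 ≤ ε * ((G + ε*μ)*(G + ε^2) - ε*(Z0 + 2*ε*Z1 + ε^2*Z2)) := by
        nlinarith [h2]
      show (G + ε*μ)*(G + ε^2) - ε*(Z0 + 2*ε*Z1 + ε^2*Z2) ≤ 0
      nlinarith [hεf, hεlt]
    have hfc : Continuous f := by rw [hf]; fun_prop
    have hf0 : f 0 ≤ 0 :=
      le_of_tendsto ((hfc.tendsto 0).mono_left nhdsWithin_le_nhds)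
        (eventually_nhdsWithin_of_forall hfneg)
    have hf0' : (G + 0*μ)*(G + 0^2) - 0*(Z0 + 2*0*Z1 + 0^2*Z2) ≤ 0 := hf0
    have hGzero : G = 0 := by nlinarith [hf0', hGnn]
    rw [hG] at hGzero
    exact dotProduct_self_eq_zero.mp hGzero
  have hstat : ∀ d : Fin m → ℝ, w ⬝ᵥ (S *ᵥ d) = μ * (vs ⬝ᵥ d) := by
    intro d
    rw [← hud, hgu, hgzero]
    simp [smul_dotProduct]
  -- μ ≥ 0
  have hμ0 : 0 ≤ μ := by
    have h := hmax (-vs) (by rw [neg_dotProduct, dotProduct_neg, hvs1]; ring)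
    have e : (ξ + S *ᵥ (-vs)) ⬝ᵥ (ξ + S *ᵥ (-vs))
        = ξ ⬝ᵥ ξ - 2*(ξ ⬝ᵥ (S *ᵥ vs)) + (S *ᵥ vs) ⬝ᵥ (S *ᵥ vs) := by
      rw [mulVec_neg]
      simp only [dotProduct_add, add_dotProduct, dotProduct_neg, neg_dotProduct,
        dotProduct_comm (S *ᵥ vs) ξ]
      ring
    have e2 : (ξ + S *ᵥ vs) ⬝ᵥ (ξ + S *ᵥ vs)
        = ξ ⬝ᵥ ξ + 2*(ξ ⬝ᵥ (S *ᵥ vs)) + (S *ᵥ vs) ⬝ᵥ (S *ᵥ vs) := by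
      simp only [dotProduct_add, add_dotProduct, dotProduct_comm (S *ᵥ vs) ξ]
      ring
    have hξS : 0 ≤ ξ ⬝ᵥ (S *ᵥ vs) := by rw [e, e2] at h; linarith
    have hμval : μ = w ⬝ᵥ (S *ᵥ vs) := by rw [hμ, hud]
    have : w ⬝ᵥ (S *ᵥ vs) = ξ ⬝ᵥ (S *ᵥ vs) + (S *ᵥ vs) ⬝ᵥ (S *ᵥ vs) := by
      rw [hw, add_dotProduct]
    nlinarith [dot_self_nonneg' (S *ᵥ vs), hμval, this]
  -- second order
  have h2aux : ∀ d : Fin m → ℝ, vs ⬝ᵥ d ≠ 0 →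
      (S *ᵥ d) ⬝ᵥ (S *ᵥ d) ≤ μ * (d ⬝ᵥ d) := by
    intro d hp
    have hdd : 0 < d ⬝ᵥ d := by
      rcases eq_or_lt_of_le (dot_self_nonneg' d) with h | h
      · exfalso; apply hp
        have : d = 0 := dotProduct_self_eq_zero.mp h.symm
        rw [this, dotProduct_zero]
      · exact h
    set p : ℝ := vs ⬝ᵥ d with hpd
    set c : ℝ := 2*p/(d ⬝ᵥ d) with hc
    have hcD : c * (d ⬝ᵥ d) = 2*p := by rw [hc]; field_simp
    have hunit : (vs - c • d) ⬝ᵥ (vs - c • d) = 1 := by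
      simp only [dotProduct_sub, sub_dotProduct, dotProduct_smul, smul_dotProduct,
        smul_eq_mul, hvs1, dotProduct_comm d vs]
      rw [← hpd]; linear_combination c * hcD
    have h := master c d hunit
    rw [hstat d, ← hpd] at h
    have h2 : 0 ≤ (d ⬝ᵥ d)^2 * (2*c*(μ*p) - c^2*((S *ᵥ d) ⬝ᵥ (S *ᵥ d))) :=
      mul_nonneg (sq_nonneg _) h
    have e2 : (d ⬝ᵥ d)^2 * (2*c*(μ*p) - c^2*((S *ᵥ d) ⬝ᵥ (S *ᵥ d)))
        = 2*(c*(d ⬝ᵥ d))*((d ⬝ᵥ d)*(μ*p)) - (c*(d ⬝ᵥ d))^2*((S *ᵥ d) ⬝ᵥ (S *ᵥ d)) := by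
      ring
    rw [e2, hcD] at h2
    have hp2 : 0 < p^2 := by positivity
    nlinarith [h2, hp2]
  have h2half : ∀ d : Fin m → ℝ, 0 ≤ vs ⬝ᵥ d →
      (S *ᵥ d) ⬝ᵥ (S *ᵥ d) ≤ μ * (d ⬝ᵥ d) := by
    intro d hpnn
    set F : ℝ → ℝ := fun ε => μ*((d ⬝ᵥ d) + 2*ε*(vs ⬝ᵥ d) + ε^2)
      - ((S *ᵥ d) ⬝ᵥ (S *ᵥ d) + 2*ε*((S *ᵥ d) ⬝ᵥ (S *ᵥ vs)) + ε^2*((S *ᵥ vs) ⬝ᵥ (S *ᵥ vs)))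
      with hF
    have hFpos : ∀ ε ∈ Set.Ioi (0:ℝ), 0 ≤ F ε := by
      intro ε hε
      have hεpos : (0:ℝ) < ε := hε
      have hp' : vs ⬝ᵥ (d + ε • vs) ≠ 0 := by
        rw [dotProduct_add, dotProduct_smul, hvs1, smul_eq_mul, mul_one]
        positivity
      have h := h2aux (d + ε • vs) hp'
      have e1 : (S *ᵥ (d + ε • vs)) ⬝ᵥ (S *ᵥ (d + ε • vs))
          = (S *ᵥ d) ⬝ᵥ (S *ᵥ d) + 2*ε*((S *ᵥ d) ⬝ᵥ (S *ᵥ vs)) + ε^2*((S *ᵥ vs) ⬝ᵥ (S *ᵥ vs)) := by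
        rw [mulVec_add, mulVec_smul]
        simp only [dotProduct_add, add_dotProduct, dotProduct_smul, smul_dotProduct,
          smul_eq_mul, dotProduct_comm (S *ᵥ vs) (S *ᵥ d)]
        ring
      have e2 : (d + ε • vs) ⬝ᵥ (d + ε • vs) = (d ⬝ᵥ d) + 2*ε*(vs ⬝ᵥ d) + ε^2 := by
        simp only [dotProduct_add, add_dotProduct, dotProduct_smul, smul_dotProduct,
          smul_eq_mul, hvs1, dotProduct_comm d vs]
        ring
      rw [e1, e2] at h
      rw [hF]; dsimp only; linarith
    have hFc : Continuous F := by rw [hF]; fun_prop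
    have hF0 : 0 ≤ F 0 :=
      ge_of_tendsto ((hFc.tendsto 0).mono_left nhdsWithin_le_nhds)
        (eventually_nhdsWithin_of_forall hFpos)
    rw [hF] at hF0; dsimp only at hF0; linarith
  have h2nd : ∀ d : Fin m → ℝ, (S *ᵥ d) ⬝ᵥ (S *ᵥ d) ≤ μ * (d ⬝ᵥ d) := by
    intro d
    rcases le_or_gt 0 (vs ⬝ᵥ d) with h | h
    · exact h2half d h
    · have := h2half (-d) (by rw [dotProduct_neg]; linarith)
      rw [mulVec_neg, neg_dotProduct, dotProduct_neg, neg_neg,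
        neg_dotProduct, dotProduct_neg, neg_neg] at this
      exact this
  -- assemble
  refine ⟨μ, hμ0, fun t v => ?_⟩
  have T1 := h2nd (t • vs - v)
  have eL : (S *ᵥ (t • vs - v)) ⬝ᵥ (S *ᵥ (t • vs - v))
      = t^2*((S *ᵥ vs) ⬝ᵥ (S *ᵥ vs)) - 2*t*((S *ᵥ vs) ⬝ᵥ (S *ᵥ v)) + (S *ᵥ v) ⬝ᵥ (S *ᵥ v) := by
    rw [mulVec_sub, mulVec_smul]
    simp only [dotProduct_sub, sub_dotProduct, dotProduct_smul, smul_dotProduct,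
      smul_eq_mul, dotProduct_comm (S *ᵥ v) (S *ᵥ vs)]
    ring
  have eR : (t • vs - v) ⬝ᵥ (t • vs - v) = t^2 - 2*t*(vs ⬝ᵥ v) + v ⬝ᵥ v := by
    simp only [dotProduct_sub, sub_dotProduct, dotProduct_smul, smul_dotProduct,
      smul_eq_mul, hvs1, dotProduct_comm v vs]
    ring
  rw [eL, eR] at T1
  have T3a : ξ ⬝ᵥ (S *ᵥ v) + (S *ᵥ vs) ⬝ᵥ (S *ᵥ v) = μ * (vs ⬝ᵥ v) := by
    have := hstat v
    rw [hw, add_dotProduct] at this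
    linarith
  have T3b : ξ ⬝ᵥ (S *ᵥ vs) + (S *ᵥ vs) ⬝ᵥ (S *ᵥ vs) = μ := by
    have := hstat vs
    rw [hw, add_dotProduct, hvs1, mul_one] at this
    linarith
  have T2 : ξ ⬝ᵥ ξ + 2*(ξ ⬝ᵥ (S *ᵥ vs)) + (S *ᵥ vs) ⬝ᵥ (S *ᵥ vs) ≤ 1 := by
    have e2 : (ξ + S *ᵥ vs) ⬝ᵥ (ξ + S *ᵥ vs)
        = ξ ⬝ᵥ ξ + 2*(ξ ⬝ᵥ (S *ᵥ vs)) + (S *ᵥ vs) ⬝ᵥ (S *ᵥ vs) := by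
      simp only [dotProduct_add, add_dotProduct, dotProduct_comm (S *ᵥ vs) ξ]
      ring
    rw [← e2]; exact hq1
  have eG : (t • ξ + S *ᵥ v) ⬝ᵥ (t • ξ + S *ᵥ v)
      = t^2*(ξ ⬝ᵥ ξ) + 2*t*(ξ ⬝ᵥ (S *ᵥ v)) + (S *ᵥ v) ⬝ᵥ (S *ᵥ v) := by
    simp only [dotProduct_add, add_dotProduct, dotProduct_smul, smul_dotProduct,
      smul_eq_mul, dotProduct_comm (S *ᵥ v) ξ]
    ring
  rw [eG]
  have hkey : 0 ≤ 1 - (ξ ⬝ᵥ ξ) - 2*μ + (S *ᵥ vs) ⬝ᵥ (S *ᵥ vs) := by linarith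
  have T3a2 : 2*t*(ξ ⬝ᵥ (S *ᵥ v)) + 2*t*((S *ᵥ vs) ⬝ᵥ (S *ᵥ v))
      = 2*t*(μ * (vs ⬝ᵥ v)) := by linear_combination 2*t*T3a
  nlinarith [T1, T3a2, mul_nonneg (sq_nonneg t) hkey]

theorem cert {r m : ℕ} (ξ : Fin r → ℝ) (S : Matrix (Fin r) (Fin m) ℝ)
    (hyp : ∀ v : Fin m → ℝ, Real.sqrt (v ⬝ᵥ v) ≤ 1 →
      (ξ + S.mulVec v) ⬝ᵥ (ξ + S.mulVec v) ≤ 1) :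
    ∃ l : ℝ, 0 ≤ l ∧ ∀ (t : ℝ) (v : Fin m → ℝ),
      0 ≤ t^2 + l * (v ⬝ᵥ v - t^2) - (t • ξ + S *ᵥ v) ⬝ᵥ (t • ξ + S *ᵥ v) := by
  rcases Nat.eq_zero_or_pos m with hm | hm
  · subst hm
    refine ⟨0, le_refl _, fun t v => ?_⟩
    have hv : v = 0 := Subsingleton.elim _ _
    have h0 := hyp 0
    simp only [Matrix.mulVec_zero, add_zero] at h0
    have hξ : ξ ⬝ᵥ ξ ≤ 1 := by
      apply h0
      simp [dotProduct]
    subst hv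
    simp only [Matrix.mulVec_zero, add_zero, zero_dotProduct, zero_mul, sub_zero]
    have : (t • ξ) ⬝ᵥ (t • ξ) = t^2 * (ξ ⬝ᵥ ξ) := by
      rw [smul_dotProduct, dotProduct_smul]; simp [smul_eq_mul]; ring
    rw [this]
    nlinarith [sq_nonneg t]
  · haveI : NeZero m := ⟨Nat.pos_iff_ne_zero.mp hm⟩
    set Sph : Set (Fin m → ℝ) := {v | v ⬝ᵥ v = 1} with hSph
    have hdotc : Continuous fun v : Fin m → ℝ => v ⬝ᵥ v := by
      unfold dotProduct; fun_prop
    have hqc : Continuous fun v : Fin m → ℝ => (ξ + S *ᵥ v) ⬝ᵥ (ξ + S *ᵥ v) := by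
      simp only [dotProduct, Matrix.mulVec, Pi.add_apply]
      fun_prop
    have hclosed : IsClosed Sph := isClosed_eq hdotc continuous_const
    have hbdd : Bornology.IsBounded Sph := by
      apply Bornology.IsBounded.subset (Metric.isBounded_closedBall (x := (0 : Fin m → ℝ)) (r := 1))
      intro v hv
      simp only [Metric.mem_closedBall, dist_zero_right]
      rw [pi_norm_le_iff_of_nonneg (by norm_num)]
      intro i
      rw [Real.norm_eq_abs, abs_le]
      have h1 : v i * v i ≤ 1 := by
        have : ∀ j ∈ Finset.univ, 0 ≤ v j * v j := fun j _ => mul_self_nonneg _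
        have := Finset.single_le_sum this (Finset.mem_univ i)
        rwa [show (∑ x, v x * v x) = v ⬝ᵥ v from rfl, hv] at this
      constructor <;> nlinarith
    have hcomp : IsCompact Sph := Metric.isCompact_iff_isClosed_bounded.mpr ⟨hclosed, hbdd⟩
    have hne : Sph.Nonempty := by
      refine ⟨Pi.single 0 1, ?_⟩
      simp [hSph, dotProduct, Pi.single_apply]
    obtain ⟨vs, hvs, hmax⟩ := hcomp.exists_isMaxOn hne hqc.continuousOn
    have hvs1 : vs ⬝ᵥ vs = 1 := hvs
    exact key_step ξ S vs hvs1 (fun v hv => hmax hv)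
      (hyp vs (by rw [hvs1, Real.sqrt_one]))

/-- S-procedure / S-lemma characterization of the robust quadratic constraint:
`sup_{‖v‖≤1} ‖ξ + Sv‖² ≤ 1` iff there exists `λ ≥ 0` such that the block matrix
`[[−ξᵀξ − λ + 1, ξᵀS], [Sᵀξ, λI − SᵀS]]` is positive semidefinite. -/
theorem s_lemma_robust_quadratic
    {r m : ℕ} (ξ : Fin r → ℝ) (S : Matrix (Fin r) (Fin m) ℝ) :
    (∀ v : Fin m → ℝ, Real.sqrt (v ⬝ᵥ v) ≤ 1 →
        (ξ + S.mulVec v) ⬝ᵥ (ξ + S.mulVec v) ≤ 1)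
      ↔ ∃ l : ℝ, 0 ≤ l ∧
          (Matrix.fromBlocks
            (Matrix.of fun _ _ : Fin 1 => -(ξ ⬝ᵥ ξ) - l + 1)
            (Matrix.of fun _ (j : Fin m) => (ξ ᵥ* S) j)
            (Matrix.of fun (i : Fin m) _ => (ξ ᵥ* S) i)
            (l • (1 : Matrix (Fin m) (Fin m) ℝ) - Sᵀ * S)).PosSemidef := by
  constructor
  · intro hyp
    obtain ⟨l, hl, hpos⟩ := cert ξ S hyp
    refine ⟨l, hl, posSemidef_iff_dotProduct_mulVec.mpr ⟨M_symm ξ S l, fun x => ?_⟩⟩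
    rw [star_trivial]
    have hx : x = Sum.elim (fun _ : Fin 1 => x (Sum.inl 0)) (x ∘ Sum.inr) := by
      funext i
      rcases i with i | i
      · have : i = 0 := Subsingleton.elim _ _
        simp [this]
      · simp
    set t : ℝ := x (Sum.inl 0)
    set v : Fin m → ℝ := x ∘ Sum.inr
    rw [hx, quadform_eq]
    have h := hpos t (-v)
    rw [mulVec_neg, neg_dotProduct, dotProduct_neg, neg_neg] at h
    rw [← sub_eq_add_neg] at h
    exact h
  · rintro ⟨l, hl, hP⟩ v hv
    obtain ⟨hsym, hpsd⟩ := posSemidef_iff_dotProduct_mulVec.mp hP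
    have hv2 : v ⬝ᵥ v ≤ 1 := by
      have h1 := Real.sq_sqrt (dot_self_nonneg' v)
      nlinarith [Real.sqrt_nonneg (v ⬝ᵥ v), hv]
    have h := hpsd (Sum.elim (fun _ : Fin 1 => (1:ℝ)) (-v))
    rw [star_trivial, quadform_eq] at h
    rw [neg_dotProduct, dotProduct_neg, neg_neg] at h
    have e : (1:ℝ) • ξ - S *ᵥ (-v) = ξ + S *ᵥ v := by
      rw [mulVec_neg, sub_neg_eq_add, one_smul]
    rw [e] at h
    nlinarith [h, hl, hv2]
end

section
/- Let g₁, …, g_r : ℝᵏ × ℝˡ → ℝ be quasi-convex functions, and let w be an ℝˡ-valued random vector with a log-concave probability density. Then the function p(d) = P(g₁(d, w) ≤ 0, …, g_r(d, w) ≤ 0) is log-concave in d, and consequently for any α ∈ (0,1) the set {d : p(d) ≥ 1 − α} is convex. -/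
open MeasureTheory Set
open scoped ENNReal NNReal

lemma PL_amgm {a b : ℝ} (ha : 0 < a) (hb : 0 < b) (hab : a + b = 1) (p q : ℝ≥0∞) :
    p ^ a * q ^ b ≤ ENNReal.ofReal a * p + ENNReal.ofReal b * q := by
  rcases eq_or_ne p ∞ with rfl | hp
  · rcases eq_or_ne q 0 with rfl | hq0
    · simp [ENNReal.zero_rpow_of_pos hb]
    · have hA : ENNReal.ofReal a ≠ 0 := (ENNReal.ofReal_pos.mpr ha).ne'
      have hT : ENNReal.ofReal a * ⊤ + ENNReal.ofReal b * q = ⊤ := by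
        rw [ENNReal.mul_top hA, top_add]
      rw [hT]; exact le_top
  · rcases eq_or_ne q ∞ with rfl | hq
    · have hB : ENNReal.ofReal b ≠ 0 := (ENNReal.ofReal_pos.mpr hb).ne'
      have hT : ENNReal.ofReal a * p + ENNReal.ofReal b * ⊤ = ⊤ := by
        rw [ENNReal.mul_top hB, add_top]
      rw [hT]; exact le_top
    · lift p to ℝ≥0 using hp
      lift q to ℝ≥0 using hq
      have key := NNReal.geom_mean_le_arith_mean2_weighted a.toNNReal b.toNNReal p q
        (by
          rw [← Real.toNNReal_add ha.le hb.le, hab]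
          simp)
      have hca : ((a.toNNReal : ℝ)) = a := Real.coe_toNNReal a ha.le
      have hcb : ((b.toNNReal : ℝ)) = b := Real.coe_toNNReal b hb.le
      rw [hca, hcb] at key
      calc (p : ℝ≥0∞) ^ a * (q : ℝ≥0∞) ^ b = ((p ^ a * q ^ b : ℝ≥0) : ℝ≥0∞) := by
            rw [ENNReal.coe_mul, ENNReal.coe_rpow_of_nonneg _ ha.le,
              ENNReal.coe_rpow_of_nonneg _ hb.le]
        _ ≤ ((a.toNNReal * p + b.toNNReal * q : ℝ≥0) : ℝ≥0∞) := by
            exact_mod_cast key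
        _ = ENNReal.ofReal a * p + ENNReal.ofReal b * q := by
            rw [ENNReal.coe_add, ENNReal.coe_mul, ENNReal.coe_mul,
              ENNReal.ofReal, ENNReal.ofReal]

lemma PL_rpow_iSup {a : ℝ} (ha : 0 < a) (u : ℕ → ℝ≥0∞) :
    (⨆ n, u n) ^ a = ⨆ n, (u n) ^ a := by
  apply le_antisymm
  · have h1 : ∀ n, u n ≤ (⨆ m, (u m) ^ a) ^ (1 / a) := fun n => by
      have h2 : u n = ((u n) ^ a) ^ (1 / a) := by
        rw [← ENNReal.rpow_mul, mul_one_div, div_self ha.ne', ENNReal.rpow_one]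
      rw [h2]
      exact ENNReal.rpow_le_rpow (le_iSup (fun m => (u m) ^ a) n) (by positivity)
    calc (⨆ n, u n) ^ a ≤ (((⨆ m, (u m) ^ a) ^ (1 / a)) : ℝ≥0∞) ^ a :=
          ENNReal.rpow_le_rpow (iSup_le h1) ha.le
      _ = ⨆ n, (u n) ^ a := by
          rw [← ENNReal.rpow_mul, one_div, inv_mul_cancel₀ ha.ne', ENNReal.rpow_one]
  · exact iSup_le fun n => ENNReal.rpow_le_rpow (le_iSup u n) ha.le

lemma PL_iSup_mul_iSup {u v : ℕ → ℝ≥0∞} (hu : Monotone u) (hv : Monotone v) :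
    (⨆ n, u n) * (⨆ n, v n) = ⨆ n, u n * v n := by
  apply le_antisymm
  · rw [ENNReal.iSup_mul]
    refine iSup_le fun n => ?_
    rw [ENNReal.mul_iSup]
    refine iSup_le fun m => ?_
    exact le_iSup_of_le (max n m)
      (mul_le_mul' (hu (le_max_left n m)) (hv (le_max_right n m)))
  · exact iSup_le fun n => mul_le_mul' (le_iSup u n) (le_iSup v n)

lemma PL_vol_image_affine {a : ℝ} (ha : 0 < a) (c : ℝ) (K : Set ℝ) :
    volume ((fun x => a * x + c) '' K) = ENNReal.ofReal a * volume K := by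
  have h1 : (fun x => a * x + c) '' K = (fun y => y + (-c)) ⁻¹' ((fun x => a * x) '' K) := by
    ext y; simp only [Set.mem_image, Set.mem_preimage]
    constructor
    · rintro ⟨x, hx, rfl⟩; exact ⟨x, hx, by ring⟩
    · rintro ⟨x, hx, hxy⟩; exact ⟨x, hx, by linarith⟩
  have h2 : (fun x => a * x) '' K = (fun y => a⁻¹ * y) ⁻¹' K := by
    ext y; simp only [Set.mem_image, Set.mem_preimage]
    constructor
    · rintro ⟨x, hx, rfl⟩; rwa [inv_mul_cancel_left₀ ha.ne']
    · intro h; exact ⟨a⁻¹ * y, h, by field_simp⟩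
  rw [h1, measure_preimage_add_right, h2,
    Real.volume_preimage_mul_left (inv_ne_zero ha.ne'), inv_inv, abs_of_pos ha]

lemma PL_compact_sum {a b : ℝ} (ha : 0 < a) (hb : 0 < b) {K L C : Set ℝ}
    (hK : IsCompact K) (hL : IsCompact L) (hKne : K.Nonempty) (hLne : L.Nonempty)
    (hsub : ∀ x ∈ K, ∀ y ∈ L, a * x + b * y ∈ C) :
    ENNReal.ofReal a * volume K + ENNReal.ofReal b * volume L ≤ volume C := by
  have hx0 : sSup K ∈ K := hK.sSup_mem hKne
  have hy0 : sInf L ∈ L := hL.sInf_mem hLne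
  set x0 := sSup K
  set y0 := sInf L
  set U : Set ℝ := (fun x => a * x + b * y0) '' K with hUdef
  set V : Set ℝ := (fun y => b * y + a * x0) '' L with hVdef
  have hUC : U ⊆ C := by rintro _ ⟨x, hx, rfl⟩; exact hsub x hx y0 hy0
  have hVC : V ⊆ C := by
    rintro _ ⟨y, hy, rfl⟩
    show b * y + a * x0 ∈ C
    rw [add_comm]
    exact hsub x0 hx0 y hy
  have hUV : U ∩ V ⊆ {a * x0 + b * y0} := by
    rintro z ⟨⟨x, hx, hxz⟩, ⟨y, hy, hyz⟩⟩
    simp only at hxz hyz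
    have h1 : z ≤ a * x0 + b * y0 := by
      rw [← hxz]
      have hxx : x ≤ x0 := le_csSup hK.bddAbove hx
      nlinarith
    have h2 : a * x0 + b * y0 ≤ z := by
      rw [← hyz]
      have hyy : y0 ≤ y := csInf_le hL.bddBelow hy
      nlinarith
    simp [le_antisymm h1 h2]
  have hUc : IsCompact U := hK.image (by continuity)
  have hVc : IsCompact V := hL.image (by continuity)
  have hvolU : volume U = ENNReal.ofReal a * volume K := PL_vol_image_affine ha _ K
  have hvolV : volume V = ENNReal.ofReal b * volume L := PL_vol_image_affine hb _ L
  have hinter : volume (U ∩ V) = 0 :=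
    le_antisymm (le_trans (measure_mono hUV) (by simp)) zero_le
  calc ENNReal.ofReal a * volume K + ENNReal.ofReal b * volume L
      = volume U + volume V := by rw [hvolU, hvolV]
    _ = volume (U ∪ V) + volume (U ∩ V) :=
        (measure_union_add_inter U hVc.measurableSet).symm
    _ = volume (U ∪ V) := by rw [hinter, add_zero]
    _ ≤ volume C := measure_mono (union_subset hUC hVC)

lemma PL_sum_le {a b : ℝ} (ha : 0 < a) (hb : 0 < b) {A B C : Set ℝ}
    (hA : MeasurableSet A) (hB : MeasurableSet B)
    (hAne : A.Nonempty) (hBne : B.Nonempty)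
    (hsub : ∀ x ∈ A, ∀ y ∈ B, a * x + b * y ∈ C) :
    ENNReal.ofReal a * volume A + ENNReal.ofReal b * volume B ≤ volume C := by
  obtain ⟨x0, hx0⟩ := hAne
  obtain ⟨y0, hy0⟩ := hBne
  have key : ∀ (K L : Set ℝ), K ⊆ A → IsCompact K → L ⊆ B → IsCompact L →
      ENNReal.ofReal a * volume K + ENNReal.ofReal b * volume L ≤ volume C := by
    intro K L hKA hKc hLB hLc
    have h1 : ENNReal.ofReal a * volume K + ENNReal.ofReal b * volume L
        ≤ ENNReal.ofReal a * volume (K ∪ {x0}) + ENNReal.ofReal b * volume (L ∪ {y0}) :=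
      add_le_add (mul_le_mul_right (measure_mono subset_union_left) _)
        (mul_le_mul_right (measure_mono subset_union_left) _)
    refine h1.trans (PL_compact_sum ha hb (hKc.union isCompact_singleton)
      (hLc.union isCompact_singleton) ⟨x0, Or.inr rfl⟩ ⟨y0, Or.inr rfl⟩ ?_)
    rintro x (hx | hx) y (hy | hy)
    · exact hsub x (hKA hx) y (hLB hy)
    · have hyy := Set.mem_singleton_iff.mp hy; subst hyy
      exact hsub x (hKA hx) _ hy0
    · have hxx := Set.mem_singleton_iff.mp hx; subst hxx
      exact hsub _ hx0 y (hLB hy)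
    · have hxx := Set.mem_singleton_iff.mp hx; subst hxx
      have hyy := Set.mem_singleton_iff.mp hy; subst hyy
      exact hsub _ hx0 _ hy0
  have hAs : volume A = ⨆ K : {K : Set ℝ // K ⊆ A ∧ IsCompact K}, volume K.1 := by
    apply le_antisymm
    · rw [hA.measure_eq_iSup_isCompact]
      exact iSup_le fun K => iSup_le fun hKA => iSup_le fun hKc =>
        le_iSup_of_le ⟨K, hKA, hKc⟩ le_rfl
    · exact iSup_le fun K => measure_mono K.2.1
  have hBs : volume B = ⨆ L : {L : Set ℝ // L ⊆ B ∧ IsCompact L}, volume L.1 := by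
    apply le_antisymm
    · rw [hB.measure_eq_iSup_isCompact]
      exact iSup_le fun L => iSup_le fun hLB => iSup_le fun hLc =>
        le_iSup_of_le ⟨L, hLB, hLc⟩ le_rfl
    · exact iSup_le fun L => measure_mono L.2.1
  haveI : Nonempty {K : Set ℝ // K ⊆ A ∧ IsCompact K} :=
    ⟨⟨∅, Set.empty_subset A, isCompact_empty⟩⟩
  haveI : Nonempty {L : Set ℝ // L ⊆ B ∧ IsCompact L} :=
    ⟨⟨∅, Set.empty_subset B, isCompact_empty⟩⟩
  rw [hAs, hBs, ENNReal.mul_iSup, ENNReal.mul_iSup, ENNReal.iSup_add]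
  refine iSup_le fun K => ?_
  rw [ENNReal.add_iSup]
  exact iSup_le fun L => key K L K.2.1 K.2.2 L.2.1 L.2.2

lemma PL_dim1_norm {a b : ℝ} (ha : 0 < a) (hb : 0 < b) (hab : a + b = 1)
    {f g h : ℝ → ℝ≥0∞} (hf : Measurable f) (hg : Measurable g) (hh : Measurable h)
    (hfs : (⨆ x, f x) = 1) (hgs : (⨆ x, g x) = 1)
    (hyp : ∀ x y, f x ^ a * g y ^ b ≤ h (a * x + b * y)) :
    ENNReal.ofReal a * (∫⁻ x, f x) + ENNReal.ofReal b * (∫⁻ x, g x) ≤ ∫⁻ x, h x := by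
  have hf1 : ∀ x, f x ≤ 1 := fun x => hfs ▸ le_iSup f x
  have hg1 : ∀ x, g x ≤ 1 := fun x => hgs ▸ le_iSup g x
  set F : ℝ → ℝ := fun x => (f x).toReal with hF
  set G : ℝ → ℝ := fun x => (g x).toReal with hG
  set H : ℝ → ℝ := fun x => (min (h x) 1).toReal with hH
  have hFof : ∀ x, ENNReal.ofReal (F x) = f x := fun x =>
    ENNReal.ofReal_toReal (lt_of_le_of_lt (hf1 x) ENNReal.one_lt_top).ne
  have hGof : ∀ x, ENNReal.ofReal (G x) = g x := fun x =>
    ENNReal.ofReal_toReal (lt_of_le_of_lt (hg1 x) ENNReal.one_lt_top).ne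
  have hHof : ∀ x, ENNReal.ofReal (H x) = min (h x) 1 := fun x =>
    ENNReal.ofReal_toReal (lt_of_le_of_lt (min_le_right _ _) ENNReal.one_lt_top).ne
  have hF1 : ∀ x, F x ≤ 1 := fun x => by
    rw [hF]; exact ENNReal.toReal_le_of_le_ofReal zero_le_one (by simpa using hf1 x)
  have hG1 : ∀ x, G x ≤ 1 := fun x => by
    rw [hG]; exact ENNReal.toReal_le_of_le_ofReal zero_le_one (by simpa using hg1 x)
  have hFm : Measurable F := hf.ennreal_toReal
  have hGm : Measurable G := hg.ennreal_toReal
  have hHm : Measurable H := (hh.min measurable_const).ennreal_toReal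
  -- layer cake
  have layF : ∫⁻ x, f x = ∫⁻ t in Set.Ioi (0:ℝ), volume {x | t < F x} := by
    rw [← lintegral_congr fun x => (hFof x)]
    exact lintegral_eq_lintegral_meas_lt volume
      (Filter.Eventually.of_forall fun x => ENNReal.toReal_nonneg) hFm.aemeasurable
  have layG : ∫⁻ x, g x = ∫⁻ t in Set.Ioi (0:ℝ), volume {x | t < G x} := by
    rw [← lintegral_congr fun x => (hGof x)]
    exact lintegral_eq_lintegral_meas_lt volume
      (Filter.Eventually.of_forall fun x => ENNReal.toReal_nonneg) hGm.aemeasurable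
  have layH : ∫⁻ x, min (h x) 1 = ∫⁻ t in Set.Ioi (0:ℝ), volume {x | t < H x} := by
    rw [← lintegral_congr fun x => (hHof x)]
    exact lintegral_eq_lintegral_meas_lt volume
      (Filter.Eventually.of_forall fun x => ENNReal.toReal_nonneg) hHm.aemeasurable
  -- restrict to Ioo 0 1
  have hsplit : ∀ (F' : ℝ → ℝ), (∀ x, F' x ≤ 1) →
      ∫⁻ t in Set.Ioi (0:ℝ), volume {x | t < F' x}
        = ∫⁻ t in Set.Ioo (0:ℝ) 1, volume {x | t < F' x} := by
    intro F' hF'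
    have hu : Set.Ioi (0:ℝ) = Set.Ioo (0:ℝ) 1 ∪ Set.Ici (1:ℝ) := by
      ext t; simp only [Set.mem_Ioi, Set.mem_union, Set.mem_Ioo, Set.mem_Ici]
      constructor
      · intro ht; rcases lt_or_ge t 1 with h1 | h1
        · exact Or.inl ⟨ht, h1⟩
        · exact Or.inr h1
      · rintro (⟨h1, _⟩ | h1); exacts [h1, lt_of_lt_of_le zero_lt_one h1]
    rw [hu, lintegral_union measurableSet_Ici
      (Set.disjoint_left.mpr fun t ht h1 => (not_lt.mpr h1) ht.2)]
    have hz : ∫⁻ t in Set.Ici (1:ℝ), volume {x | t < F' x} = 0 := by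
      have hzero : ∀ t ∈ Set.Ici (1:ℝ), volume {x | t < F' x} = (0:ℝ≥0∞) := by
        intro t ht
        have hemp : {x | t < F' x} = ∅ := by
          ext x; simp only [Set.mem_setOf_eq, Set.mem_empty_iff_false, iff_false, not_lt]
          exact (hF' x).trans ht
        simp [hemp]
      calc ∫⁻ t in Set.Ici (1:ℝ), volume {x | t < F' x}
          = ∫⁻ _ in Set.Ici (1:ℝ), (0:ℝ≥0∞) :=
            setLIntegral_congr_fun measurableSet_Ici
              hzero
        _ = 0 := lintegral_zero

    rw [hz, add_zero]
  -- pointwise superlevel inequality on Ioo 0 1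
  have hlevel : ∀ t ∈ Set.Ioo (0:ℝ) 1,
      ENNReal.ofReal a * volume {x | t < F x} + ENNReal.ofReal b * volume {x | t < G x}
        ≤ volume {x | t < H x} := by
    intro t ht
    have htpos : (0:ℝ) < t := ht.1
    have ht1 : t < 1 := ht.2
    have hot : ENNReal.ofReal t < 1 := by
      rw [← ENNReal.ofReal_one]; exact ENNReal.ofReal_lt_ofReal_iff_of_nonneg htpos.le |>.mpr ht1
    have hAne : {x | t < F x}.Nonempty := by
      obtain ⟨x, hx⟩ := lt_iSup_iff.mp (hfs ▸ hot : ENNReal.ofReal t < ⨆ x, f x)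
      exact ⟨x, (ENNReal.ofReal_lt_iff_lt_toReal htpos.le
        (lt_of_le_of_lt (hf1 x) ENNReal.one_lt_top).ne).mp hx⟩
    have hBne : {x | t < G x}.Nonempty := by
      obtain ⟨x, hx⟩ := lt_iSup_iff.mp (hgs ▸ hot : ENNReal.ofReal t < ⨆ x, g x)
      exact ⟨x, (ENNReal.ofReal_lt_iff_lt_toReal htpos.le
        (lt_of_le_of_lt (hg1 x) ENNReal.one_lt_top).ne).mp hx⟩
    refine PL_sum_le ha hb (measurableSet_lt measurable_const hFm)
      (measurableSet_lt measurable_const hGm) hAne hBne ?_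
    intro x hx y hy
    have hfx : ENNReal.ofReal t < f x := by
      rw [← hFof x]; exact ENNReal.ofReal_lt_ofReal_iff_of_nonneg htpos.le |>.mpr hx
    have hgy : ENNReal.ofReal t < g y := by
      rw [← hGof y]; exact ENNReal.ofReal_lt_ofReal_iff_of_nonneg htpos.le |>.mpr hy
    have hne0 : ENNReal.ofReal t ≠ 0 := (ENNReal.ofReal_pos.mpr htpos).ne'
    have hstep : ENNReal.ofReal t < f x ^ a * g y ^ b := by
      have e1 : ENNReal.ofReal t = ENNReal.ofReal t ^ a * ENNReal.ofReal t ^ b := by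
        rw [← ENNReal.rpow_add a b hne0 ENNReal.ofReal_ne_top, hab, ENNReal.rpow_one]
      rw [e1]
      calc ENNReal.ofReal t ^ a * ENNReal.ofReal t ^ b
          < f x ^ a * ENNReal.ofReal t ^ b := by
            refine ENNReal.mul_lt_mul_left ?_ ?_ (ENNReal.rpow_lt_rpow hfx ha)
            · exact (ENNReal.rpow_pos (ENNReal.ofReal_pos.mpr htpos) ENNReal.ofReal_ne_top).ne'
            · exact ENNReal.rpow_ne_top_of_nonneg hb.le ENNReal.ofReal_ne_top
        _ ≤ f x ^ a * g y ^ b :=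
            mul_le_mul_right (ENNReal.rpow_le_rpow hgy.le hb.le) _
    have hmin : ENNReal.ofReal t < min (h (a * x + b * y)) 1 :=
      lt_min (lt_of_lt_of_le hstep (hyp x y)) hot
    exact (ENNReal.ofReal_lt_iff_lt_toReal htpos.le
      (lt_of_le_of_lt (min_le_right _ _) ENNReal.one_lt_top).ne).mp hmin
  -- assemble
  have hmeasF : Measurable fun t : ℝ => volume {x | t < F x} := by
    apply Antitone.measurable
    intro s t hst
    exact measure_mono fun x hx => lt_of_le_of_lt hst hx
  have hmeasG : Measurable fun t : ℝ => volume {x | t < G x} := by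
    apply Antitone.measurable
    intro s t hst
    exact measure_mono fun x hx => lt_of_le_of_lt hst hx
  calc ENNReal.ofReal a * (∫⁻ x, f x) + ENNReal.ofReal b * (∫⁻ x, g x)
      = ∫⁻ t in Set.Ioo (0:ℝ) 1,
          (ENNReal.ofReal a * volume {x | t < F x}
            + ENNReal.ofReal b * volume {x | t < G x}) := by
        rw [layF, layG, hsplit F hF1, hsplit G hG1]
        rw [lintegral_add_left (hmeasF.const_mul _)]
        rw [lintegral_const_mul _ hmeasF, lintegral_const_mul _ hmeasG]
    _ ≤ ∫⁻ t in Set.Ioo (0:ℝ) 1, volume {x | t < H x} := by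
        refine setLIntegral_mono (by
          apply Antitone.measurable
          intro s t hst
          exact measure_mono fun x hx => lt_of_le_of_lt hst hx) hlevel
    _ ≤ ∫⁻ t in Set.Ioi (0:ℝ), volume {x | t < H x} :=
        lintegral_mono_set Set.Ioo_subset_Ioi_self
    _ = ∫⁻ x, min (h x) 1 := layH.symm
    _ ≤ ∫⁻ x, h x := lintegral_mono fun x => min_le_left _ _

/-- The Prékopa–Leindler property of a measure on a real vector space. -/
def PLProp {E : Type*} [MeasurableSpace E] [AddCommMonoid E] [Module ℝ E]
    (μ : Measure E) : Prop :=
  ∀ (a b : ℝ), 0 < a → 0 < b → a + b = 1 →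
    ∀ f g h : E → ℝ≥0∞, Measurable f → Measurable g → Measurable h →
      (∀ x y, f x ^ a * g y ^ b ≤ h (a • x + b • y)) →
      (∫⁻ x, f x ∂μ) ^ a * (∫⁻ x, g x ∂μ) ^ b ≤ ∫⁻ x, h x ∂μ

lemma PL_dim1_fin {a b : ℝ} (ha : 0 < a) (hb : 0 < b) (hab : a + b = 1)
    {f g h : ℝ → ℝ≥0∞} (hf : Measurable f) (hg : Measurable g) (hh : Measurable h)
    (hMf : (⨆ x, f x) ≠ ⊤) (hMg : (⨆ x, g x) ≠ ⊤)
    (hyp : ∀ x y, f x ^ a * g y ^ b ≤ h (a * x + b * y)) :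
    (∫⁻ x, f x) ^ a * (∫⁻ x, g x) ^ b ≤ ∫⁻ x, h x := by
  set Mf := ⨆ x, f x with hMfdef
  set Mg := ⨆ x, g x with hMgdef
  rcases eq_or_ne Mf 0 with hMf0 | hMf0
  · have hfz : ∀ x, f x = 0 := fun x => le_antisymm (hMf0 ▸ le_iSup f x) zero_le
    have : (∫⁻ x, f x) = 0 := by simp [hfz]
    rw [this, ENNReal.zero_rpow_of_pos ha, zero_mul]
    exact zero_le
  rcases eq_or_ne Mg 0 with hMg0 | hMg0
  · have hgz : ∀ x, g x = 0 := fun x => le_antisymm (hMg0 ▸ le_iSup g x) zero_le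
    have : (∫⁻ x, g x) = 0 := by simp [hgz]
    rw [this, ENNReal.zero_rpow_of_pos hb, mul_zero]
    exact zero_le
  have hMfa0 : Mf ^ a ≠ 0 := (ENNReal.rpow_pos (pos_iff_ne_zero.mpr hMf0) hMf).ne'
  have hMfat : Mf ^ a ≠ ⊤ := ENNReal.rpow_ne_top_of_nonneg ha.le hMf
  have hMgb0 : Mg ^ b ≠ 0 := (ENNReal.rpow_pos (pos_iff_ne_zero.mpr hMg0) hMg).ne'
  have hMgbt : Mg ^ b ≠ ⊤ := ENNReal.rpow_ne_top_of_nonneg hb.le hMg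
  set c : ℝ≥0∞ := (Mf ^ a)⁻¹ * (Mg ^ b)⁻¹ with hcdef
  have hc0 : c ≠ 0 := mul_ne_zero (ENNReal.inv_ne_zero.mpr hMfat) (ENNReal.inv_ne_zero.mpr hMgbt)
  have hct : c ≠ ⊤ := ENNReal.mul_ne_top (ENNReal.inv_ne_top.mpr hMfa0)
    (ENNReal.inv_ne_top.mpr hMgb0)
  set f' : ℝ → ℝ≥0∞ := fun x => Mf⁻¹ * f x with hf'def
  set g' : ℝ → ℝ≥0∞ := fun x => Mg⁻¹ * g x with hg'def
  set h' : ℝ → ℝ≥0∞ := fun x => c * h x with hh'def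
  have hf'm : Measurable f' := hf.const_mul _
  have hg'm : Measurable g' := hg.const_mul _
  have hh'm : Measurable h' := hh.const_mul _
  have hf's : (⨆ x, f' x) = 1 := by
    rw [hf'def]
    simp only [← ENNReal.mul_iSup]
    exact ENNReal.inv_mul_cancel hMf0 hMf
  have hg's : (⨆ x, g' x) = 1 := by
    rw [hg'def]
    simp only [← ENNReal.mul_iSup]
    exact ENNReal.inv_mul_cancel hMg0 hMg
  have hyp' : ∀ x y, f' x ^ a * g' y ^ b ≤ h' (a * x + b * y) := by
    intro x y
    have e1 : f' x ^ a * g' y ^ b = c * (f x ^ a * g y ^ b) := by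
      rw [hf'def, hg'def, hcdef]
      simp only [ENNReal.mul_rpow_of_nonneg _ _ ha.le, ENNReal.mul_rpow_of_nonneg _ _ hb.le,
        ENNReal.inv_rpow]
      ring
    rw [e1, hh'def]
    exact mul_le_mul_right (hyp x y) c
  have hnorm := PL_dim1_norm ha hb hab hf'm hg'm hh'm hf's hg's hyp'
  have hAM : (∫⁻ x, f' x) ^ a * (∫⁻ x, g' x) ^ b
      ≤ ENNReal.ofReal a * (∫⁻ x, f' x) + ENNReal.ofReal b * (∫⁻ x, g' x) :=
    PL_amgm ha hb hab _ _
  have hkey : (∫⁻ x, f' x) ^ a * (∫⁻ x, g' x) ^ b ≤ ∫⁻ x, h' x := hAM.trans hnorm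
  have e2 : (∫⁻ x, f' x) = Mf⁻¹ * ∫⁻ x, f x := lintegral_const_mul _ hf
  have e3 : (∫⁻ x, g' x) = Mg⁻¹ * ∫⁻ x, g x := lintegral_const_mul _ hg
  have e4 : (∫⁻ x, h' x) = c * ∫⁻ x, h x := lintegral_const_mul _ hh
  rw [e2, e3, e4, ENNReal.mul_rpow_of_nonneg _ _ ha.le, ENNReal.mul_rpow_of_nonneg _ _ hb.le,
    ENNReal.inv_rpow, ENNReal.inv_rpow] at hkey
  have e5 : (Mf ^ a)⁻¹ * (∫⁻ x, f x) ^ a * ((Mg ^ b)⁻¹ * (∫⁻ x, g x) ^ b)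
      = c * ((∫⁻ x, f x) ^ a * (∫⁻ x, g x) ^ b) := by
    rw [hcdef]; ring
  rw [e5] at hkey
  exact (ENNReal.mul_le_mul_iff_right hc0 hct).mp hkey

lemma PL_dim1 : PLProp (volume : Measure ℝ) := by
  intro a b ha hb hab f g h hf hg hh hyp
  simp only [smul_eq_mul] at hyp
  -- truncate
  set fn : ℕ → ℝ → ℝ≥0∞ := fun n x => min (f x) ((n : ℝ≥0∞) + 1) with hfndef
  set gn : ℕ → ℝ → ℝ≥0∞ := fun n x => min (g x) ((n : ℝ≥0∞) + 1) with hgndef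
  set hn : ℕ → ℝ → ℝ≥0∞ := fun n x => min (h x) ((n : ℝ≥0∞) + 1) with hhndef
  have hsup_top : (⨆ n : ℕ, ((n : ℝ≥0∞) + 1)) = ⊤ := by
    rw [eq_top_iff, ← ENNReal.iSup_natCast]
    exact iSup_mono fun n => le_self_add
  have hsupn : ∀ (u : ℝ → ℝ≥0∞) (x : ℝ), (⨆ n : ℕ, min (u x) ((n : ℝ≥0∞) + 1)) = u x := by
    intro u x
    show (⨆ n : ℕ, u x ⊓ ((n : ℝ≥0∞) + 1)) = u x
    rw [← inf_iSup_eq, hsup_top, inf_top_eq]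
  have hmin_meas : ∀ (u : ℝ → ℝ≥0∞), Measurable u → ∀ n : ℕ,
      Measurable fun x => min (u x) ((n : ℝ≥0∞) + 1) :=
    fun u hu n => hu.min measurable_const
  have hmin_mono : ∀ (u : ℝ → ℝ≥0∞), Monotone fun (n : ℕ) (x : ℝ) => min (u x) ((n : ℝ≥0∞) + 1) := by
    intro u m n hmn x
    exact min_le_min le_rfl (add_le_add_left (by exact_mod_cast Nat.cast_le.mpr hmn) 1)
  have hNne : ∀ n : ℕ, ((n : ℝ≥0∞) + 1) ≠ 0 := fun n => by simp
  have hNnt : ∀ n : ℕ, ((n : ℝ≥0∞) + 1) ≠ ⊤ := fun n =>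
    ENNReal.add_ne_top.mpr ⟨ENNReal.natCast_ne_top n, ENNReal.one_ne_top⟩
  have hstep : ∀ n : ℕ, (∫⁻ x, fn n x) ^ a * (∫⁻ x, gn n x) ^ b ≤ ∫⁻ x, h x := by
    intro n
    have hypn : ∀ x y, fn n x ^ a * gn n y ^ b ≤ hn n (a * x + b * y) := by
      intro x y
      refine le_min ?_ ?_
      · calc fn n x ^ a * gn n y ^ b ≤ f x ^ a * g y ^ b :=
            mul_le_mul' (ENNReal.rpow_le_rpow (min_le_left _ _) ha.le)
              (ENNReal.rpow_le_rpow (min_le_left _ _) hb.le)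
          _ ≤ h (a * x + b * y) := hyp x y
      · calc fn n x ^ a * gn n y ^ b ≤ ((n : ℝ≥0∞) + 1) ^ a * ((n : ℝ≥0∞) + 1) ^ b :=
            mul_le_mul' (ENNReal.rpow_le_rpow (min_le_right _ _) ha.le)
              (ENNReal.rpow_le_rpow (min_le_right _ _) hb.le)
          _ = ((n : ℝ≥0∞) + 1) := by
            rw [← ENNReal.rpow_add a b (hNne n) (hNnt n), hab, ENNReal.rpow_one]
    have hsf : (⨆ x, fn n x) ≠ ⊤ :=
      (lt_of_le_of_lt (iSup_le fun x => min_le_right _ _) (lt_top_iff_ne_top.mpr (hNnt n))).ne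
    have hsg : (⨆ x, gn n x) ≠ ⊤ :=
      (lt_of_le_of_lt (iSup_le fun x => min_le_right _ _) (lt_top_iff_ne_top.mpr (hNnt n))).ne
    exact (PL_dim1_fin ha hb hab (hmin_meas f hf n) (hmin_meas g hg n) (hmin_meas h hh n)
      hsf hsg hypn).trans (lintegral_mono fun x => min_le_left _ _)
  have hFlim : (⨆ n : ℕ, ∫⁻ x, fn n x) = ∫⁻ x, f x := by
    rw [← lintegral_iSup (hmin_meas f hf) (hmin_mono f)]
    exact lintegral_congr fun x => hsupn f x
  have hGlim : (⨆ n : ℕ, ∫⁻ x, gn n x) = ∫⁻ x, g x := by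
    rw [← lintegral_iSup (hmin_meas g hg) (hmin_mono g)]
    exact lintegral_congr fun x => hsupn g x
  have hFmono : Monotone fun n : ℕ => ∫⁻ x, fn n x :=
    fun m n hmn => lintegral_mono fun x => hmin_mono f hmn x
  have hGmono : Monotone fun n : ℕ => ∫⁻ x, gn n x :=
    fun m n hmn => lintegral_mono fun x => hmin_mono g hmn x
  calc (∫⁻ x, f x) ^ a * (∫⁻ x, g x) ^ b
      = (⨆ n : ℕ, (∫⁻ x, fn n x) ^ a) * ⨆ n : ℕ, (∫⁻ x, gn n x) ^ b := by
        rw [← hFlim, ← hGlim, PL_rpow_iSup ha, PL_rpow_iSup hb]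
    _ = ⨆ n : ℕ, (∫⁻ x, fn n x) ^ a * (∫⁻ x, gn n x) ^ b :=
        PL_iSup_mul_iSup (fun m n hmn => ENNReal.rpow_le_rpow (hFmono hmn) ha.le)
          (fun m n hmn => ENNReal.rpow_le_rpow (hGmono hmn) hb.le)
    _ ≤ ∫⁻ x, h x := iSup_le hstep

lemma PL_prod {E F : Type*} [MeasurableSpace E] [MeasurableSpace F]
    [AddCommMonoid E] [Module ℝ E] [AddCommMonoid F] [Module ℝ F]
    {μ : Measure E} {ν : Measure F} [SigmaFinite μ] [SigmaFinite ν]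
    (hμ : PLProp μ) (hν : PLProp ν) : PLProp (μ.prod ν) := by
  intro a b ha hb hab f g h hf hg hh hyp
  set F1 : E → ℝ≥0∞ := fun x => ∫⁻ y, f (x, y) ∂ν with hF1
  set G1 : E → ℝ≥0∞ := fun x => ∫⁻ y, g (x, y) ∂ν with hG1
  set H1 : E → ℝ≥0∞ := fun x => ∫⁻ y, h (x, y) ∂ν with hH1
  have hF1m : Measurable F1 := hf.lintegral_prod_right'
  have hG1m : Measurable G1 := hg.lintegral_prod_right'
  have hH1m : Measurable H1 := hh.lintegral_prod_right'
  have hmarg : ∀ x1 x2, F1 x1 ^ a * G1 x2 ^ b ≤ H1 (a • x1 + b • x2) := by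
    intro x1 x2
    refine hν a b ha hb hab (fun y => f (x1, y)) (fun y => g (x2, y))
      (fun y => h (a • x1 + b • x2, y)) (hf.comp measurable_prodMk_left)
      (hg.comp measurable_prodMk_left) (hh.comp measurable_prodMk_left) ?_
    intro y1 y2
    have := hyp (x1, y1) (x2, y2)
    have he : a • (x1, y1) + b • (x2, y2) = (a • x1 + b • x2, a • y1 + b • y2) := rfl
    rwa [he] at this
  have key := hμ a b ha hb hab F1 G1 H1 hF1m hG1m hH1m hmarg
  rw [lintegral_prod f hf.aemeasurable, lintegral_prod g hg.aemeasurable,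
    lintegral_prod h hh.aemeasurable]
  exact key

lemma PL_map {E F : Type*} [MeasurableSpace E] [MeasurableSpace F]
    [AddCommMonoid E] [Module ℝ E] [AddCommMonoid F] [Module ℝ F]
    (e : E ≃ᵐ F) (helin : ∀ (a b : ℝ) (x y : E), e (a • x + b • y) = a • e x + b • e y)
    {μ : Measure E} (hμ : PLProp μ) : PLProp (Measure.map e μ) := by
  intro a b ha hb hab f g h hf hg hh hyp
  have key := hμ a b ha hb hab (f ∘ e) (g ∘ e) (h ∘ e) (hf.comp e.measurable)
    (hg.comp e.measurable) (hh.comp e.measurable) (fun x y => by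
      show f (e x) ^ a * g (e y) ^ b ≤ h (e (a • x + b • y))
      rw [helin]
      exact hyp (e x) (e y))
  rw [lintegral_map hf e.measurable, lintegral_map hg e.measurable,
    lintegral_map hh e.measurable]
  exact key

lemma PL_pi : ∀ n : ℕ, PLProp (volume : Measure (Fin n → ℝ)) := by
  intro n
  induction n with
  | zero =>
    intro a b ha hb hab f g h hf hg hh hyp
    have huniv : (volume : Measure (Fin 0 → ℝ)) Set.univ = 1 := by
      rw [MeasureTheory.volume_pi, Measure.pi_univ]
      simp
    have hint : ∀ u : (Fin 0 → ℝ) → ℝ≥0∞, ∫⁻ x, u x = u default := by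
      intro u
      rw [lintegral_unique, huniv, mul_one]
      exact congrArg u (Subsingleton.elim _ _)
    rw [hint f, hint g, hint h]
    have hd : a • (default : Fin 0 → ℝ) + b • default = default := Subsingleton.elim _ _
    have := hyp default default
    rwa [hd] at this
  | succ n ih =>
    have h1 : PLProp ((volume : Measure ℝ).prod (volume : Measure (Fin n → ℝ))) :=
      PL_prod PL_dim1 ih
    set e : (Fin (n + 1) → ℝ) ≃ᵐ ℝ × (Fin n → ℝ) :=
      MeasurableEquiv.piFinSuccAbove (fun _ => ℝ) 0 with hedef
    have hmp : MeasurePreserving e volume volume :=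
      MeasureTheory.volume_preserving_piFinSuccAbove (fun _ => ℝ) 0
    have helinf : ∀ (a b : ℝ) (u v : Fin (n + 1) → ℝ),
        e (a • u + b • v) = a • e u + b • e v := by
      intro a b u v
      rfl
    have helin : ∀ (a b : ℝ) (x y : ℝ × (Fin n → ℝ)),
        e.symm (a • x + b • y) = a • e.symm x + b • e.symm y := by
      intro a b x y
      apply e.injective
      rw [e.apply_symm_apply, helinf, e.apply_symm_apply, e.apply_symm_apply]
    have hmapeq : Measure.map e.symm (volume : Measure (ℝ × (Fin n → ℝ)))
        = (volume : Measure (Fin (n + 1) → ℝ)) := hmp.symm e |>.map_eq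
    rw [← hmapeq]
    exact PL_map e.symm helin h1

/-- The probability `p(d) = P(g₁(d,w) ≤ 0, …, g_r(d,w) ≤ 0)`. -/
noncomputable def ccProb {Ω : Type*} [MeasurableSpace Ω] (P : Measure Ω)
    {k l r : ℕ} (g : Fin r → (Fin k → ℝ) × (Fin l → ℝ) → ℝ)
    (w : Ω → Fin l → ℝ) (d : Fin k → ℝ) : ℝ :=
  (P {ω | ∀ i, g i (d, w ω) ≤ 0}).toReal

/-- Prékopa-type result: if the `gᵢ` are quasi-convex and `w` has a log-concave
probability density `f`, then `p(d) = P(g₁(d,w) ≤ 0, …, g_r(d,w) ≤ 0)` is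
log-concave in `d`, and consequently for every `α ∈ (0,1)` the set
`{d : p(d) ≥ 1 − α}` is convex. -/
theorem prob_logConcave_and_constraint_set_convex
    {Ω : Type*} [MeasurableSpace Ω] (P : Measure Ω) [IsProbabilityMeasure P]
    {k l r : ℕ}
    (g : Fin r → (Fin k → ℝ) × (Fin l → ℝ) → ℝ)
    (hgqc : ∀ i, QuasiconvexOn ℝ Set.univ (g i))
    (hgmeas : ∀ i, Measurable (g i))
    (w : Ω → Fin l → ℝ) (hw : Measurable w)
    (f : (Fin l → ℝ) → ℝ) (hf0 : ∀ x, 0 ≤ f x) (hfmeas : Measurable f)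
    (hflc : ∀ x y : Fin l → ℝ, ∀ a b : ℝ, 0 ≤ a → 0 ≤ b → a + b = 1 →
      (f x) ^ a * (f y) ^ b ≤ f (a • x + b • y))
    (hlaw : Measure.map w P = volume.withDensity (fun x => ENNReal.ofReal (f x))) :
    (∀ d d' : Fin k → ℝ, ∀ a b : ℝ, 0 ≤ a → 0 ≤ b → a + b = 1 →
        (ccProb P g w d) ^ a * (ccProb P g w d') ^ b ≤ ccProb P g w (a • d + b • d')) ∧
      (∀ α ∈ Set.Ioo (0:ℝ) 1, Convex ℝ {d : Fin k → ℝ | 1 - α ≤ ccProb P g w d}) := by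
  set S : (Fin k → ℝ) → Set (Fin l → ℝ) := fun d => {x | ∀ i, g i (d, x) ≤ 0} with hSdef
  have hSmeas : ∀ d, MeasurableSet (S d) := by
    intro d
    have he : S d = ⋂ i, {x | g i (d, x) ≤ 0} := by
      ext x; simp [hSdef, Set.mem_iInter]
    rw [he]
    exact MeasurableSet.iInter fun i =>
      measurableSet_le ((hgmeas i).comp (measurable_const.prodMk measurable_id))
        measurable_const
  set φ : (Fin k → ℝ) → (Fin l → ℝ) → ℝ≥0∞ :=
    fun d => (S d).indicator (fun x => ENNReal.ofReal (f x)) with hφdef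
  have hφmeas : ∀ d, Measurable (φ d) := fun d =>
    (hfmeas.ennreal_ofReal).indicator (hSmeas d)
  have hcc : ∀ d, ccProb P g w d = (∫⁻ x, φ d x).toReal := by
    intro d
    have h1 : {ω | ∀ i, g i (d, w ω) ≤ 0} = w ⁻¹' (S d) := rfl
    rw [ccProb, h1, ← Measure.map_apply hw (hSmeas d), hlaw,
      withDensity_apply _ (hSmeas d), hφdef]
    rw [lintegral_indicator (hSmeas d)]
  have hfin : ∀ d, (∫⁻ x, φ d x) ≠ ⊤ := by
    intro d
    have h1 : (∫⁻ x, φ d x) ≤ ∫⁻ x, ENNReal.ofReal (f x) :=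
      lintegral_mono fun x => Set.indicator_le_self _ _ x
    have h2 : (∫⁻ x, ENNReal.ofReal (f x)) = Measure.map w P Set.univ := by
      rw [hlaw, withDensity_apply _ MeasurableSet.univ, setLIntegral_univ]
    haveI : IsProbabilityMeasure (Measure.map w P) :=
      Measure.isProbabilityMeasure_map hw.aemeasurable
    rw [h2, measure_univ] at h1
    exact (lt_of_le_of_lt h1 ENNReal.one_lt_top).ne
  have key : ∀ (d d' : Fin k → ℝ) (a b : ℝ), 0 < a → 0 < b → a + b = 1 →
      (∫⁻ x, φ d x) ^ a * (∫⁻ x, φ d' x) ^ b ≤ ∫⁻ x, φ (a • d + b • d') x := by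
    intro d d' a b ha hb hab
    refine PL_pi l a b ha hb hab (φ d) (φ d') (φ (a • d + b • d'))
      (hφmeas d) (hφmeas d') (hφmeas _) ?_
    intro x y
    by_cases hx : x ∈ S d
    · by_cases hy : y ∈ S d'
      · have hmem : a • x + b • y ∈ S (a • d + b • d') := by
          intro i
          have hmx : (d, x) ∈ {p ∈ Set.univ | g i p ≤ 0} :=
            Set.mem_sep (Set.mem_univ _) (hx i)
          have hmy : (d', y) ∈ {p ∈ Set.univ | g i p ≤ 0} :=
            Set.mem_sep (Set.mem_univ _) (hy i)
          have hres := hgqc i (0:ℝ) hmx hmy ha.le hb.le hab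
          have heq : a • ((d, x) : (Fin k → ℝ) × (Fin l → ℝ)) + b • (d', y)
              = (a • d + b • d', a • x + b • y) := rfl
          rw [heq] at hres
          exact hres.2
        rw [hφdef]
        simp only [Set.indicator_of_mem hx, Set.indicator_of_mem hy,
          Set.indicator_of_mem hmem]
        rw [ENNReal.ofReal_rpow_of_nonneg (hf0 x) ha.le,
          ENNReal.ofReal_rpow_of_nonneg (hf0 y) hb.le,
          ← ENNReal.ofReal_mul (Real.rpow_nonneg (hf0 x) a)]
        exact ENNReal.ofReal_le_ofReal (hflc x y a b ha.le hb.le hab)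
      · rw [hφdef]
        simp only [Set.indicator_of_notMem hy]
        rw [ENNReal.zero_rpow_of_pos hb, mul_zero]
        exact zero_le
    · rw [hφdef]
      simp only [Set.indicator_of_notMem hx]
      rw [ENNReal.zero_rpow_of_pos ha, zero_mul]
      exact zero_le
  have part1 : ∀ d d' : Fin k → ℝ, ∀ a b : ℝ, 0 ≤ a → 0 ≤ b → a + b = 1 →
      (ccProb P g w d) ^ a * (ccProb P g w d') ^ b ≤ ccProb P g w (a • d + b • d') := by
    intro d d' a b ha hb hab
    rcases eq_or_lt_of_le ha with rfl | ha'
    · have hb1 : b = 1 := by linarith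
      subst hb1
      simp [Real.rpow_zero, Real.rpow_one]
    rcases eq_or_lt_of_le hb with rfl | hb'
    · have ha1 : a = 1 := by linarith
      subst ha1
      simp [Real.rpow_zero, Real.rpow_one]
    have h := key d d' a b ha' hb' hab
    rw [hcc, hcc, hcc]
    calc (∫⁻ x, φ d x).toReal ^ a * (∫⁻ x, φ d' x).toReal ^ b
        = ((∫⁻ x, φ d x) ^ a * (∫⁻ x, φ d' x) ^ b).toReal := by
          rw [ENNReal.toReal_rpow, ENNReal.toReal_rpow, ENNReal.toReal_mul]
      _ ≤ (∫⁻ x, φ (a • d + b • d') x).toReal := ENNReal.toReal_mono (hfin _) h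
  refine ⟨part1, ?_⟩
  intro α hα d hd d' hd' a b ha hb hab
  have hα1 : (0:ℝ) < 1 - α := by linarith [hα.2]
  have hd1 : 1 - α ≤ ccProb P g w d := hd
  have hd2 : 1 - α ≤ ccProb P g w d' := hd'
  show 1 - α ≤ ccProb P g w (a • d + b • d')
  calc (1:ℝ) - α = (1 - α) ^ a * (1 - α) ^ b := by
        rw [← Real.rpow_add hα1, hab, Real.rpow_one]
    _ ≤ (ccProb P g w d) ^ a * (ccProb P g w d') ^ b := by
        refine mul_le_mul (Real.rpow_le_rpow hα1.le hd1 ha)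
          (Real.rpow_le_rpow hα1.le hd2 hb) (Real.rpow_nonneg hα1.le b)
          (Real.rpow_nonneg (le_trans hα1.le hd1) a)
    _ ≤ ccProb P g w (a • d + b • d') := part1 d d' a b ha hb hab
end
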